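/- Let n = 3d-5 with d ≥ 3. The number T(n,d) of lattice paths of n steps (each step (±1, +1)) that first cross the line x = n+2-2d and then later cross the line x = 0 equals n. -/

import Mathlib

open scoped Classical

/-- The `x`-coordinate after `j` of the `n` free steps of a lattice path that starts
at `(0,0)`, whose (forced) first move is to the right, reaching `(1,1)`.  Each step
`s i = true` is a right move `(+1,+1)` and `s i = false` a left move `(-1,+1)`. -/
def pathPos (n : ℕ) (s : Fin n → Bool) (j : ℕ) : ℤ :=
  1 + ∑ i ∈ Finset.univ.filter (fun i : Fin n => (i : ℕ) < j),
    (if s i then (1 : ℤ) else -1)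

open Finset

/-- whether step `i` of path number `p` is a left (down in x) move. -/
def DS (d p i : ℕ) : Prop :=
  (p < d - 3 ∧ (i = p ∨ (d - 1 ≤ i ∧ i ≤ 2*d - 3))) ∨
  (d - 3 ≤ p ∧ p ≤ 2*d - 3 ∧ (d - 3 ≤ i ∧ i ≤ 2*d - 3 ∧ i ≠ p)) ∨
  (2*d - 3 < p ∧ (i = p ∨ (d - 3 ≤ i ∧ i ≤ 2*d - 5)))

instance DS.dec : ∀ d p i, Decidable (DS d p i) := fun d p i => by
  unfold DS; infer_instance

lemma DS_iff (d p i : ℕ) : DS d p i ↔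
    ((p < d - 3 ∧ (i = p ∨ (d - 1 ≤ i ∧ i ≤ 2*d - 3))) ∨
    (d - 3 ≤ p ∧ p ≤ 2*d - 3 ∧ (d - 3 ≤ i ∧ i ≤ 2*d - 3 ∧ i ≠ p)) ∨
    (2*d - 3 < p ∧ (i = p ∨ (d - 3 ≤ i ∧ i ≤ 2*d - 5)))) := Iff.rfl

def fs (n d p : ℕ) : Fin n → Bool := fun i => ! decide (DS d p i.val)

lemma fs_false_iff {n d p : ℕ} (i : Fin n) : fs n d p i = false ↔ DS d p i.val := by
  simp [fs]

lemma card_filter_val (n : ℕ) (Q : ℕ → Prop) [DecidablePred Q] :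
    (Finset.univ.filter fun i : Fin n => Q i.val).card
      = ((Finset.range n).filter Q).card := by
  apply Finset.card_bij (fun i _ => i.val)
  · intro a ha
    simp only [mem_filter, mem_univ, true_and] at ha
    simp [mem_filter, ha, a.isLt]
  · intro a _ b _ h
    exact Fin.val_injective h
  · intro b hb
    simp only [mem_filter, mem_range] at hb
    exact ⟨⟨b, hb.1⟩, by simp [hb.2], rfl⟩

lemma card_lt_filter (n j : ℕ) (hj : j ≤ n) :
    (Finset.univ.filter fun i : Fin n => i.val < j).card = j := by
  rw [card_filter_val n (fun m => m < j)]
  have : (Finset.range n).filter (fun i => i < j) = Finset.range j := by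
    ext i; simp [mem_filter, mem_range]; omega
  rw [this, Finset.card_range]

section counts
variable {n : ℕ} (s : Fin n → Bool)

/-- number of steps in `[a,b)` with value `c`. -/
def Gc (a b : ℕ) (c : Bool) : ℕ :=
  (Finset.univ.filter fun i : Fin n => a ≤ i.val ∧ i.val < b ∧ s i = c).card

lemma Gc_split {a b c : ℕ} (x : Bool) (hab : a ≤ b) (hbc : b ≤ c) :
    Gc s a c x = Gc s a b x + Gc s b c x := by
  unfold Gc
  rw [← Finset.card_union_of_disjoint]
  · congr 1
    ext i
    simp only [mem_filter, mem_union, mem_univ, true_and]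
    constructor
    · rintro ⟨h1, h2, h3⟩
      rcases lt_or_ge i.val b with h | h
      · exact Or.inl ⟨h1, h, h3⟩
      · exact Or.inr ⟨h, h2, h3⟩
    · rintro (⟨h1, h2, h3⟩ | ⟨h1, h2, h3⟩)
      · exact ⟨h1, lt_of_lt_of_le h2 hbc, h3⟩
      · exact ⟨le_trans hab h1, h2, h3⟩
  · rw [Finset.disjoint_left]
    intro i hi hi'
    simp only [mem_filter, mem_univ, true_and] at hi hi'
    omega

lemma Gc_total {a b : ℕ} (hab : a ≤ b) (hb : b ≤ n) :
    Gc s a b false + Gc s a b true = b - a := by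
  unfold Gc
  have h1 : ∀ x : Bool, (Finset.univ.filter fun i : Fin n => a ≤ i.val ∧ i.val < b ∧ s i = x)
      = (Finset.univ.filter fun i : Fin n => a ≤ i.val ∧ i.val < b).filter (fun i => s i = x) := by
    intro x; rw [Finset.filter_filter]; congr 1; ext i; tauto
  rw [h1 false, h1 true]
  have h2 : ((Finset.univ.filter fun i : Fin n => a ≤ i.val ∧ i.val < b).filter (fun i => s i = true))
      = ((Finset.univ.filter fun i : Fin n => a ≤ i.val ∧ i.val < b).filter (fun i => ¬ s i = false)) := by
    apply Finset.filter_congr; intro i _; simp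
  rw [h2, Finset.card_filter_add_card_filter_not]
  rw [card_filter_val n (fun m => a ≤ m ∧ m < b)]
  have : (Finset.range n).filter (fun m => a ≤ m ∧ m < b) = Finset.Ico a b := by
    ext i; simp [mem_filter, mem_range, mem_Ico]; omega
  rw [this, Nat.card_Ico]

lemma pathPos_eq {j : ℕ} (hj : j ≤ n) :
    pathPos n s j = 1 + (j : ℤ) - 2 * (Gc s 0 j false : ℤ) := by
  unfold pathPos
  rw [Finset.sum_ite]
  simp only [Finset.sum_const, nsmul_eq_mul, mul_one, mul_neg]
  rw [Finset.filter_filter, Finset.filter_filter]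
  have hT : (Finset.univ.filter fun i : Fin n => i.val < j ∧ s i = true)
      = (Finset.univ.filter fun i : Fin n => i.val < j).filter (fun i => ¬ s i = false) := by
    rw [Finset.filter_filter]; apply Finset.filter_congr; intro i _; simp
  have hF : (Finset.univ.filter fun i : Fin n => i.val < j ∧ ¬ s i = true)
      = (Finset.univ.filter fun i : Fin n => i.val < j).filter (fun i => s i = false) := by
    rw [Finset.filter_filter]; apply Finset.filter_congr; intro i _; simp
  have hG : Gc s 0 j false
      = ((Finset.univ.filter fun i : Fin n => i.val < j).filter (fun i => s i = false)).card := by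
    unfold Gc; rw [Finset.filter_filter]; congr 1; apply Finset.filter_congr; intro i _
    simp
  rw [hT, hF, hG]
  have hsum := Finset.card_filter_add_card_filter_not
    (s := Finset.univ.filter fun i : Fin n => i.val < j) (p := fun i => s i = false)
  rw [card_lt_filter n j hj] at hsum
  push_cast
  omega

lemma count_zero {a b : ℕ} {x : Bool} (h : Gc s a b x = 0) :
    ∀ i : Fin n, a ≤ i.val → i.val < b → s i ≠ x := by
  rw [Gc, Finset.card_eq_zero] at h
  intro i h1 h2 hx
  have : i ∈ (Finset.univ.filter fun i : Fin n => a ≤ i.val ∧ i.val < b ∧ s i = x) := by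
    simp [h1, h2, hx]
  rw [h] at this
  simp at this

lemma count_one {a b : ℕ} {x : Bool} (h : Gc s a b x = 1) :
    ∃ p : Fin n, a ≤ p.val ∧ p.val < b ∧ s p = x ∧
      ∀ i : Fin n, a ≤ i.val → i.val < b → i.val ≠ p.val → s i ≠ x := by
  rw [Gc, Finset.card_eq_one] at h
  obtain ⟨p, hp⟩ := h
  have hpm : p ∈ (Finset.univ.filter fun i : Fin n => a ≤ i.val ∧ i.val < b ∧ s i = x) := by
    rw [hp]; exact Finset.mem_singleton_self p
  simp only [mem_filter, mem_univ, true_and] at hpm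
  refine ⟨p, hpm.1, hpm.2.1, hpm.2.2, ?_⟩
  intro i h1 h2 h3 hx
  have : i ∈ (Finset.univ.filter fun i : Fin n => a ≤ i.val ∧ i.val < b ∧ s i = x) := by
    simp [h1, h2, hx]
  rw [hp] at this
  simp only [Finset.mem_singleton] at this
  exact h3 (by rw [this])

end counts

lemma Gc_fs_eq (n d p j : ℕ) :
    Gc (fs n d p) 0 j false
      = ((Finset.range n).filter fun m => m < j ∧ DS d p m).card := by
  unfold Gc
  have h : (Finset.univ.filter fun i : Fin n => 0 ≤ i.val ∧ i.val < j ∧ fs n d p i = false)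
      = (Finset.univ.filter fun i : Fin n => (fun m => m < j ∧ DS d p m) i.val) := by
    ext i
    simp [fs]
  rw [h, card_filter_val n (fun m => m < j ∧ DS d p m)]

lemma fs_mem (d n : ℕ) (hd : 3 ≤ d) (hn : n = 3*d-5) (p : ℕ) (hp : p < n) :
    pathPos n (fs n d p) n = (n : ℤ) + 1 - 2 * d ∧
    ∃ t₁ t₂ : ℕ, t₁ < t₂ ∧ t₂ ≤ n ∧
      pathPos n (fs n d p) t₁ = (n : ℤ) + 3 - 2 * d ∧
      pathPos n (fs n d p) t₂ = -1 := by
  rcases lt_or_ge p (d-3) with hp1 | hp1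
  · -- region 1
    have hd4 : 4 ≤ d := by omega
    have hF1 : ((Finset.range n).filter fun m => m < d-1 ∧ DS d p m) = {p} := by
      ext m; simp only [mem_filter, mem_range, Finset.mem_singleton] <;> simp only [DS] <;> omega
    have hF2 : ((Finset.range n).filter fun m => m < 2*d-2 ∧ DS d p m)
        = insert p (Finset.Icc (d-1) (2*d-3)) := by
      ext m
      simp only [mem_filter, mem_range, Finset.mem_insert, Finset.mem_Icc] <;> simp only [DS] <;> omega
    have hFn : ((Finset.range n).filter fun m => m < n ∧ DS d p m)
        = insert p (Finset.Icc (d-1) (2*d-3)) := by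
      ext m
      simp only [mem_filter, mem_range, Finset.mem_insert, Finset.mem_Icc] <;> simp only [DS] <;> omega
    have hcard : (insert p (Finset.Icc (d-1) (2*d-3))).card = d := by
      rw [Finset.card_insert_of_notMem (by simp [Finset.mem_Icc]; omega), Nat.card_Icc]
      omega
    refine ⟨?_, d-1, 2*d-2, by omega, by omega, ?_, ?_⟩
    · rw [pathPos_eq _ (le_refl n), Gc_fs_eq, hFn, hcard]; omega
    · rw [pathPos_eq _ (by omega : d-1 ≤ n), Gc_fs_eq, hF1, Finset.card_singleton]; omega
    · rw [pathPos_eq _ (by omega : 2*d-2 ≤ n), Gc_fs_eq, hF2, hcard]; omega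
  · rcases le_or_gt p (2*d-3) with hp2 | hp2
    · -- region 2
      have hF1 : ((Finset.range n).filter fun m => m < d-3 ∧ DS d p m) = ∅ := by
        ext m; simp only [mem_filter, mem_range, Finset.notMem_empty, iff_false] <;> simp only [DS] <;> omega
      have hF2 : ∀ j, j = 2*d-2 ∨ j = n →
          ((Finset.range n).filter fun m => m < j ∧ DS d p m)
          = (Finset.Icc (d-3) (2*d-3)).erase p := by
        intro j hj
        ext m
        simp only [mem_filter, mem_range, Finset.mem_erase, Finset.mem_Icc] <;> simp only [DS] <;> omega
      have hcard : ((Finset.Icc (d-3) (2*d-3)).erase p).card = d := by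
        rw [Finset.card_erase_of_mem (by simp [Finset.mem_Icc]; omega), Nat.card_Icc]
        omega
      refine ⟨?_, d-3, 2*d-2, by omega, by omega, ?_, ?_⟩
      · rw [pathPos_eq _ (le_refl n), Gc_fs_eq, hF2 n (Or.inr rfl), hcard]; omega
      · rw [pathPos_eq _ (by omega : d-3 ≤ n), Gc_fs_eq, hF1, Finset.card_empty]; omega
      · rw [pathPos_eq _ (by omega : 2*d-2 ≤ n), Gc_fs_eq, hF2 _ (Or.inl rfl), hcard]; omega
    · -- region 3
      have hd4 : 4 ≤ d := by omega
      have hF1 : ((Finset.range n).filter fun m => m < d-3 ∧ DS d p m) = ∅ := by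
        ext m; simp only [mem_filter, mem_range, Finset.notMem_empty, iff_false] <;> simp only [DS] <;> omega
      have hF2 : ((Finset.range n).filter fun m => m < 2*d-4 ∧ DS d p m)
          = Finset.Icc (d-3) (2*d-5) := by
        ext m; simp only [mem_filter, mem_range, Finset.mem_Icc] <;> simp only [DS] <;> omega
      have hFn : ((Finset.range n).filter fun m => m < n ∧ DS d p m)
          = insert p (Finset.Icc (d-3) (2*d-5)) := by
        ext m
        simp only [mem_filter, mem_range, Finset.mem_insert, Finset.mem_Icc] <;> simp only [DS] <;> omega
      have hcard : (insert p (Finset.Icc (d-3) (2*d-5))).card = d := by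
        rw [Finset.card_insert_of_notMem (by simp [Finset.mem_Icc]; omega), Nat.card_Icc]
        omega
      refine ⟨?_, d-3, 2*d-4, by omega, by omega, ?_, ?_⟩
      · rw [pathPos_eq _ (le_refl n), Gc_fs_eq, hFn, hcard]; omega
      · rw [pathPos_eq _ (by omega : d-3 ≤ n), Gc_fs_eq, hF1, Finset.card_empty]; omega
      · rw [pathPos_eq _ (by omega : 2*d-4 ≤ n), Gc_fs_eq, hF2, Nat.card_Icc]; omega

lemma eq_fs_of_iff {n d p : ℕ} {s : Fin n → Bool}
    (h : ∀ i : Fin n, s i = false ↔ DS d p i.val) : s = fs n d p := by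
  funext i
  by_cases hD : DS d p i.val
  · rw [(h i).mpr hD]; simp [fs, hD]
  · have ht : s i = true := by
      cases hv : s i
      · exact absurd ((h i).mp hv) hD
      · rfl
    rw [ht]; simp [fs, hD]

lemma fs_inj (d n : ℕ) (hd : 3 ≤ d) (hn : n = 3*d-5) {p q : ℕ}
    (hp : p < n) (hq : q < n) (h : fs n d p = fs n d q) : p = q := by
  have h1 := congrFun h ⟨p, hp⟩
  have h2 := congrFun h ⟨q, hq⟩
  simp only [fs] at h1 h2
  have e1 : DS d p p ↔ DS d q p := decide_eq_decide.mp (Bool.not_inj h1)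
  have e2 : DS d p q ↔ DS d q q := decide_eq_decide.mp (Bool.not_inj h2)
  rw [DS_iff, DS_iff] at e1 e2
  omega

lemma arith_cases (d n t₁ t₂ A1 A2 B1 B2 C1 C2 M1 M2 : ℕ)
    (hd : 3 ≤ d) (hn : n = 3*d-5) (ht12 : t₁ < t₂) (ht2 : t₂ ≤ n)
    (hend : (1:ℤ) + n - 2*M2 = n + 1 - 2*d)
    (h1 : (1:ℤ) + t₁ - 2*A1 = n + 3 - 2*d)
    (h2 : (1:ℤ) + t₂ - 2*M1 = -1)
    (e01 : M1 = A1 + B1) (e02 : M2 = M1 + C1)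
    (tot1 : A1 + A2 = t₁ - 0) (tot2 : B1 + B2 = t₂ - t₁) (tot3 : C1 + C2 = n - t₂) :
      (t₁ = d-1 ∧ t₂ = 2*d-2 ∧ A1 = 1 ∧ B2 = 0 ∧ C1 = 0)
    ∨ (t₁ = d-3 ∧ t₂ = 2*d-2 ∧ A1 = 0 ∧ B2 = 1 ∧ C1 = 0)
    ∨ (t₁ = d-3 ∧ t₂ = 2*d-4 ∧ A1 = 0 ∧ B2 = 0 ∧ C1 = 1) := by
  subst hn
  have hM2 : M2 = d := by omega
  have hA : t₁ + 3 = d + 2*A1 := by omega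
  have hM : t₂ + 2 = 2*M1 := by omega
  clear hend h1 h2
  have hsum : A1 + B2 + C1 = 1 := by omega
  have h1' : A1 = 1 ∨ B2 = 1 ∨ C1 = 1 := by omega
  rcases h1' with h | h | h
  · left; refine ⟨by omega, by omega, by omega, by omega, by omega⟩
  · right; left; refine ⟨by omega, by omega, by omega, by omega, by omega⟩
  · right; right; refine ⟨by omega, by omega, by omega, by omega, by omega⟩

lemma mem_rev (d n : ℕ) (hd : 3 ≤ d) (hn : n = 3*d-5) (s : Fin n → Bool)
    (hend : pathPos n s n = (n : ℤ) + 1 - 2 * d)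
    (t₁ t₂ : ℕ) (ht12 : t₁ < t₂) (ht2 : t₂ ≤ n)
    (h1 : pathPos n s t₁ = (n : ℤ) + 3 - 2 * d)
    (h2 : pathPos n s t₂ = -1) :
    ∃ p, p < n ∧ s = fs n d p := by
  have ht1n : t₁ ≤ n := by omega
  rw [pathPos_eq _ (le_refl n)] at hend
  rw [pathPos_eq _ ht1n] at h1
  rw [pathPos_eq _ ht2] at h2
  have e01 : Gc s 0 t₂ false = Gc s 0 t₁ false + Gc s t₁ t₂ false :=
    Gc_split s false (by omega) (by omega)
  have e02 : Gc s 0 n false = Gc s 0 t₂ false + Gc s t₂ n false :=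
    Gc_split s false (by omega) (by omega)
  have tot1 : Gc s 0 t₁ false + Gc s 0 t₁ true = t₁ - 0 := Gc_total s (by omega) ht1n
  have tot2 : Gc s t₁ t₂ false + Gc s t₁ t₂ true = t₂ - t₁ := Gc_total s (by omega) ht2
  have tot3 : Gc s t₂ n false + Gc s t₂ n true = n - t₂ := Gc_total s ht2 (le_refl n)
  have hcases :
      (t₁ = d-1 ∧ t₂ = 2*d-2 ∧ Gc s 0 t₁ false = 1 ∧ Gc s t₁ t₂ true = 0 ∧ Gc s t₂ n false = 0)
    ∨ (t₁ = d-3 ∧ t₂ = 2*d-2 ∧ Gc s 0 t₁ false = 0 ∧ Gc s t₁ t₂ true = 1 ∧ Gc s t₂ n false = 0)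
    ∨ (t₁ = d-3 ∧ t₂ = 2*d-4 ∧ Gc s 0 t₁ false = 0 ∧ Gc s t₁ t₂ true = 0 ∧ Gc s t₂ n false = 1) :=
    arith_cases d n t₁ t₂ _ _ _ _ _ _ _ _ hd hn ht12 ht2 hend h1 h2 e01 e02 tot1 tot2 tot3
  rcases hcases with ⟨ha1, ha2, ha3, ha4, ha5⟩ | ⟨ha1, ha2, ha3, ha4, ha5⟩ |
    ⟨ha1, ha2, ha3, ha4, ha5⟩
  · -- case A : one false in the prefix
    subst ha1 ha2
    obtain ⟨p, hpa, hpb, hpf, hpu⟩ := count_one s ha3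
    have hmid := count_zero s ha4
    have hsuf := count_zero s ha5
    have char : ∀ i : Fin n, s i = false ↔
        (i.val = p.val ∨ (d-1 ≤ i.val ∧ i.val ≤ 2*d-3)) := by
      intro i
      rcases lt_or_ge i.val (d-1) with h | h
      · constructor
        · intro hf
          by_contra hc
          push_neg at hc
          exact hpu i (Nat.zero_le _) h hc.1 hf
        · rintro (hc | hc)
          · rw [Fin.ext hc]; exact hpf
          · omega
      · rcases lt_or_ge i.val (2*d-2) with h' | h'
        · constructor
          · intro _; right; omega
          · intro _
            have := hmid i h h'
            revert this; cases s i <;> simp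
        · constructor
          · intro hf; exact absurd hf (hsuf i h' i.isLt)
          · rintro (hc | hc) <;> omega
    rcases (by omega : p.val < d-3 ∨ p.val = d-3 ∨ p.val = d-2) with hsub | hsub | hsub
    · exact ⟨p.val, by omega, eq_fs_of_iff (fun i => by
        rw [char i, DS_iff]; omega)⟩
    · exact ⟨d-2, by omega, eq_fs_of_iff (fun i => by
        rw [char i, DS_iff]; omega)⟩
    · exact ⟨d-3, by omega, eq_fs_of_iff (fun i => by
        rw [char i, DS_iff]; omega)⟩
  · -- case B : one true in the middle
    subst ha1 ha2
    have hpre := count_zero s ha3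
    obtain ⟨q, hqa, hqb, hqt, hqu⟩ := count_one s ha4
    have hsuf := count_zero s ha5
    have char : ∀ i : Fin n, s i = false ↔
        (d-3 ≤ i.val ∧ i.val ≤ 2*d-3 ∧ i.val ≠ q.val) := by
      intro i
      rcases lt_or_ge i.val (d-3) with h | h
      · constructor
        · intro hf; exact absurd hf (hpre i (Nat.zero_le _) h)
        · intro hc; omega
      · rcases lt_or_ge i.val (2*d-2) with h' | h'
        · by_cases hiq : i.val = q.val
          · rw [Fin.ext hiq, hqt]
            constructor
            · intro hcon; exact absurd hcon (by simp)
            · intro hc; omega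
          · have hf : s i = false := by
              have := hqu i h h' hiq
              revert this; cases s i <;> simp
            rw [hf]
            constructor
            · intro _; exact ⟨h, by omega, hiq⟩
            · intro _; rfl
        · constructor
          · intro hf; exact absurd hf (hsuf i h' i.isLt)
          · intro hc; omega
    exact ⟨q.val, by omega, eq_fs_of_iff (fun i => by
      rw [char i, DS_iff]; omega)⟩
  · -- case C : one false in the suffix
    subst ha1 ha2
    have hpre := count_zero s ha3
    have hmid := count_zero s ha4
    obtain ⟨q, hqa, hqb, hqf, hqu⟩ := count_one s ha5
    have char : ∀ i : Fin n, s i = false ↔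
        ((d-3 ≤ i.val ∧ i.val ≤ 2*d-5) ∨ i.val = q.val) := by
      intro i
      rcases lt_or_ge i.val (d-3) with h | h
      · constructor
        · intro hf; exact absurd hf (hpre i (Nat.zero_le _) h)
        · rintro (hc | hc) <;> omega
      · rcases lt_or_ge i.val (2*d-4) with h' | h'
        · have hf : s i = false := by
            have := hmid i h h'
            revert this; cases s i <;> simp
          rw [hf]
          constructor
          · intro _; left; exact ⟨h, by omega⟩
          · intro _; rfl
        · constructor
          · intro hf
            by_contra hc
            push_neg at hc
            exact hqu i h' i.isLt hc.2 hf
          · rintro (hc | hc)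
            · omega
            · rw [Fin.ext hc]; exact hqf
    rcases (by omega : q.val = 2*d-4 ∨ q.val = 2*d-3 ∨ 2*d-3 < q.val) with hsub | hsub | hsub
    · exact ⟨2*d-3, by omega, eq_fs_of_iff (fun i => by
        rw [char i, DS_iff]; omega)⟩
    · exact ⟨2*d-4, by omega, eq_fs_of_iff (fun i => by
        rw [char i, DS_iff]; omega)⟩
    · exact ⟨q.val, by omega, eq_fs_of_iff (fun i => by
        rw [char i, DS_iff]; omega)⟩

/-- For `n = 3d-5`, there are exactly `n` lattice paths (from `(0,0)` to
`(n+2-2d, n+2)`, with first and last moves to the right, encoded by its `n` free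
steps) that first crosses the line `x = n+2-2d` (i.e. reaches `x = n+3-2d`) and
subsequently crosses the line `x = 0` (i.e. reaches `x = -1`). -/
theorem lattice_path_count_n (d : ℕ) (hd : 3 ≤ d) (n : ℕ) (hn : n = 3 * d - 5) :
    ((Finset.univ : Finset (Fin n → Bool)).filter fun s =>
        pathPos n s n = (n : ℤ) + 1 - 2 * d ∧
        ∃ t₁ t₂ : ℕ, t₁ < t₂ ∧ t₂ ≤ n ∧
          pathPos n s t₁ = (n : ℤ) + 3 - 2 * d ∧ pathPos n s t₂ = -1).card = n := by
  have hn' : n = 3*d-5 := by omega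
  have key : ((Finset.univ : Finset (Fin n → Bool)).filter fun s =>
        pathPos n s n = (n : ℤ) + 1 - 2 * d ∧
        ∃ t₁ t₂ : ℕ, t₁ < t₂ ∧ t₂ ≤ n ∧
          pathPos n s t₁ = (n : ℤ) + 3 - 2 * d ∧ pathPos n s t₂ = -1)
      = (Finset.range n).image (fun p => fs n d p) := by
    ext s
    simp only [Finset.mem_filter, Finset.mem_univ, true_and, Finset.mem_image,
      Finset.mem_range]
    constructor
    · rintro ⟨hend, t₁, t₂, ht12, ht2, h1, h2⟩
      obtain ⟨p, hp, hs⟩ := mem_rev d n hd hn' s hend t₁ t₂ ht12 ht2 h1 h2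
      exact ⟨p, hp, hs.symm⟩
    · rintro ⟨p, hp, rfl⟩
      exact fs_mem d n hd hn' p hp
  rw [key, Finset.card_image_of_injOn
    (fun p hp q hq h => fs_inj d n hd hn' (Finset.mem_range.mp hp) (Finset.mem_range.mp hq) h),
    Finset.card_range]
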